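/- Let A be a (not necessarily unital) associative algebra satisfying a_1⋯a_n = a_{σ(1)}⋯a_{σ(n)} for some σ ∈ S_n with σ(1) ≠ 1. Then A satisfies the degree-(n+2) identity corresponding to the transposition (1 2): for all a_1,...,a_{n+2} ∈ A, a_1 a_2 a_3 ⋯ a_{n+2} = a_2 a_1 a_3 ⋯ a_{n+2}. -/

import Mathlib

/-- Product of a nonempty list in a (non-unital) multiplicative structure;
junk value `0` for the empty list. -/
def listMul {A : Type*} [Mul A] [Zero A] : List A → A
  | [] => 0
  | [x] => x
  | x :: y :: l => x * listMul (y :: l)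

/-- The product `a 0 * a 1 * ⋯ * a (k-1)`. -/
def finProd {A : Type*} [Mul A] [Zero A] {k : ℕ} (a : Fin k → A) : A :=
  listMul (List.ofFn a)

section helpers
variable {A : Type*} [Semigroup A] [Zero A]

lemma listMul_cons (a : A) (l : List A) (h : l ≠ []) :
    listMul (a :: l) = a * listMul l := by
  cases l with
  | nil => exact absurd rfl h
  | cons b t => rfl

lemma listMul_mulcons (y a : A) (l : List A) :
    listMul ((y * a) :: l) = y * listMul (a :: l) := by
  cases l with
  | nil => rfl
  | cons b t =>
      show (y * a) * listMul (b :: t) = y * (a * listMul (b :: t))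
      rw [mul_assoc]

lemma listMul_flat (P : List A) (a b : A) (s : List A) :
    listMul (P ++ (a * b) :: s) = listMul (P ++ a :: b :: s) := by
  induction P with
  | nil =>
      simp only [List.nil_append]
      rw [listMul_mulcons]
      rfl
  | cons h P ih =>
      have h1 : (P ++ (a * b) :: s) ≠ [] := by simp
      have h2 : (P ++ a :: b :: s) ≠ [] := by simp
      simp only [List.cons_append, listMul_cons _ _ h1, listMul_cons _ _ h2, ih]

end helpers

theorem swap12_identity_degree_plus_two {F A : Type*} [Field F] [NonUnitalRing A] [Module F A]
    [SMulCommClass F A A] [IsScalarTower F A A]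
    (n : ℕ) (σ : Equiv.Perm (Fin (n + 1))) (hσ : σ 0 ≠ 0)
    (hid : ∀ b : Fin (n + 1) → A, finProd b = finProd (fun i => b (σ i))) :
    ∀ a : Fin (n + 3) → A,
      finProd a = finProd (fun j => a (Equiv.swap (0 : Fin (n + 3)) 1 j)) := by
  have ht0 : σ⁻¹ 0 ≠ 0 := by
    intro h
    exact hσ (by simpa using (congrArg σ h).symm)
  set t : ℕ := ((σ⁻¹ 0 : Fin (n + 1)) : ℕ) with ht_def
  have ht1 : 1 ≤ t := by
    rcases Nat.eq_zero_or_pos t with h | h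
    · exact absurd (Fin.ext h) ht0
    · exact h
  have htn : t ≤ n := Fin.is_le _
  -- the jump rule
  have star : ∀ (y m : A) (P S : List A), P.length = t → P.length + S.length = n →
      listMul (P ++ (y * m) :: S) = y * listMul (P ++ m :: S) := by
    intro y m P S hP hPS
    set l : List A := P ++ m :: S with hl_def
    have hl : l.length = n + 1 := by simp [hl_def]; omega
    set c : Fin (n + 1) → A := fun j => l[((σ⁻¹ j : Fin (n+1)) : ℕ)]'(by rw [hl]; exact (σ⁻¹ j).isLt) with hc_def
    have hc0 : c 0 = m := by
      show l[((σ⁻¹ 0 : Fin (n+1)) : ℕ)]'_ = m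
      rw [getElem_congr_idx (show ((σ⁻¹ 0 : Fin (n+1)) : ℕ) = P.length by omega),
        getElem_congr_coll hl_def]
      rw [List.getElem_append_right le_rfl]
      simp
    have hcσ : ∀ (i : Fin (n+1)) (h : (i : ℕ) < l.length), c (σ i) = l[(i : ℕ)] := by
      intro i h
      show l[((σ⁻¹ (σ i) : Fin (n+1)) : ℕ)]'_ = l[(i : ℕ)]
      congr 1
      rw [show σ⁻¹ (σ i) = i from Equiv.Perm.inv_eq_iff_eq.mpr rfl]
    have hcl : List.ofFn (fun i => c (σ i)) = l := by
      apply List.ext_getElem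
      · simp [hl]
      · intro i h1 h2
        simp only [List.getElem_ofFn]
        exact hcσ ⟨i, by simpa using h1⟩ h2
    have E2 : listMul (List.ofFn c) = listMul l := by
      have := hid c
      simp only [finProd] at this
      rw [this, hcl]
    set c' : Fin (n+1) → A := Function.update c 0 (y * m) with hc'_def
    have h1 : List.ofFn c' = (y * m) :: List.ofFn (fun i : Fin n => c i.succ) := by
      rw [List.ofFn_succ]
      have e0 : c' 0 = y * m := by simp [hc'_def]
      have e1 : (fun i : Fin n => c' i.succ) = fun i : Fin n => c i.succ := by
        funext i
        simp [hc'_def, Function.update_of_ne (Fin.succ_ne_zero i)]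
      rw [show (fun i : Fin n => c' i.succ) = fun i : Fin n => c i.succ from e1, e0]
    have h0 : List.ofFn c = m :: List.ofFn (fun i : Fin n => c i.succ) := by
      rw [List.ofFn_succ, hc0]
    have h2 : List.ofFn (fun i => c' (σ i)) = P ++ (y * m) :: S := by
      apply List.ext_getElem
      · simp [hl_def] at hl ⊢; omega
      · intro i h1' h2'
        simp only [List.getElem_ofFn]
        by_cases hit : (⟨i, by simpa using h1'⟩ : Fin (n+1)) = σ⁻¹ 0
        · have hσi : σ (⟨i, by simpa using h1'⟩ : Fin (n+1)) = 0 := by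
            rw [hit]; exact (Equiv.eq_symm_apply σ).mp rfl
          rw [hσi]
          have hival : i = t := by
            have := congrArg (fun x : Fin (n+1) => (x : ℕ)) hit
            rw [ht_def]; simpa using this
          simp only [hc'_def, Function.update_self]
          rw [List.getElem_append_right (show P.length ≤ i by omega)]
          simp [hP, hival]
        · have hσi : σ (⟨i, by simpa using h1'⟩ : Fin (n+1)) ≠ 0 := by
            intro h
            refine hit (σ.injective ?_)
            rw [show σ (σ⁻¹ 0) = 0 from (Equiv.eq_symm_apply σ).mp rfl]
            exact h
          have : c' (σ (⟨i, by simpa using h1'⟩ : Fin (n+1)))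
              = c (σ (⟨i, by simpa using h1'⟩ : Fin (n+1))) := by
            simp [hc'_def, Function.update_of_ne hσi]
          rw [this, hcσ _ (by simpa [hl] using h1')]
          have hit' : i ≠ t := by
            intro h
            exact hit (Fin.ext (by simpa [ht_def] using h))
          rw [getElem_congr_coll hl_def]
          rcases Nat.lt_or_ge i P.length with hlt | hge
          · rw [List.getElem_append_left hlt, List.getElem_append_left hlt]
          · have hgt : P.length < i := by omega
            rw [List.getElem_append_right hge, List.getElem_append_right hge]
            rw [getElem_congr_idx (show i - P.length = (i - P.length - 1) + 1 by omega)]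
            rw [getElem_congr_idx (show i - P.length = (i - P.length - 1) + 1 by omega)]
            rw [List.getElem_cons_succ, List.getElem_cons_succ]
    -- combine
    have E1 : listMul (List.ofFn c') = listMul (List.ofFn (fun i => c' (σ i))) := by
      have := hid c'
      simpa [finProd] using this
    calc listMul (P ++ (y * m) :: S) = listMul (List.ofFn (fun i => c' (σ i))) := by rw [h2]
      _ = listMul (List.ofFn c') := E1.symm
      _ = listMul ((y * m) :: List.ofFn (fun i : Fin n => c i.succ)) := by rw [h1]
      _ = y * listMul (m :: List.ofFn (fun i : Fin n => c i.succ)) := listMul_mulcons _ _ _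
      _ = y * listMul (List.ofFn c) := by rw [← h0]
      _ = y * listMul l := by rw [E2]
  -- now the main argument
  intro a
  set x : A := a 0 with hx
  set y : A := a 1 with hy
  set zs : List A := List.ofFn (fun i : Fin (n+1) => a i.succ.succ) with hzs_def
  have hzslen : zs.length = n + 1 := by simp [hzs_def]
  have hofa : List.ofFn a = x :: y :: zs := by
    rw [List.ofFn_succ, List.ofFn_succ]
    rfl
  have hofswap : List.ofFn (fun j => a (Equiv.swap (0 : Fin (n + 3)) 1 j)) = y :: x :: zs := by
    rw [List.ofFn_succ, List.ofFn_succ]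
    have e0 : Equiv.swap (0 : Fin (n + 3)) 1 0 = 1 := Equiv.swap_apply_left _ _
    have e1 : Equiv.swap (0 : Fin (n + 3)) 1 (Fin.succ 0) = 0 := by
      rw [Fin.succ_zero_eq_one]
      exact Equiv.swap_apply_right _ _
    have e2 : ∀ i : Fin (n+1), Equiv.swap (0 : Fin (n + 3)) 1 i.succ.succ = i.succ.succ := by
      intro i
      apply Equiv.swap_apply_of_ne_of_ne
      · exact Fin.succ_ne_zero _
      · intro h
        have := congrArg (fun z : Fin (n+3) => (z : ℕ)) h
        simp [Fin.val_succ] at this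
    simp only [e0, e1, e2]
    rfl
  -- split zs
  have htlt : t < zs.length := by omega
  set P : List A := zs.take t with hP_def
  set w : A := zs[t] with hw_def
  set S : List A := zs.drop (t + 1) with hS_def
  have hzs_split : zs = P ++ w :: S := by
    rw [hP_def, hw_def, hS_def]
    rw [List.getElem_cons_drop htlt]
    exact (List.take_append_drop t zs).symm
  have hP : P.length = t := by
    rw [hP_def, List.length_take]
    omega
  have hS : S.length = n - t := by
    rw [hS_def, List.length_drop]
    omega
  have hPS : P.length + S.length = n := by omega
  -- P is nonempty; split off its last element
  have hPne : P ≠ [] := by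
    intro h
    rw [h] at hP
    simp at hP
    omega
  set P' : List A := P.dropLast with hP'_def
  set p : A := P.getLast hPne with hp_def
  have hPsplit : P = P' ++ [p] := (List.dropLast_append_getLast hPne).symm
  have hP'len : P'.length = t - 1 := by
    rw [hP'_def, List.length_dropLast, hP]
  set Pb : List A := P' ++ [p * x] with hPb_def
  have hPb : Pb.length = t := by
    rw [hPb_def]
    simp [hP'len]
    omega
  have hPbS : Pb.length + S.length = n := by omega
  have hzs_ne : zs ≠ [] := by
    intro h; rw [h] at hzslen; simp at hzslen
  -- chain
  have step1 : listMul (x :: y :: zs) = (x * y) * listMul zs := by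
    show x * listMul (y :: zs) = (x * y) * listMul zs
    rw [listMul_cons y zs hzs_ne, mul_assoc]
  have step2 : (x * y) * listMul zs = listMul (P ++ ((x * y) * w) :: S) := by
    rw [hzs_split]
    exact (star (x * y) w P S hP hPS).symm
  have step3 : listMul (P ++ ((x * y) * w) :: S) = listMul (P ++ x :: y :: w :: S) := by
    rw [listMul_flat P (x * y) w S, listMul_flat P x y (w :: S)]
  have stepb : listMul (P ++ x :: y :: w :: S) = y * listMul (P ++ x :: w :: S) := by
    have e1 : listMul (Pb ++ (y * w) :: S) = y * listMul (Pb ++ w :: S) :=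
      star y w Pb S hPb hPbS
    have e2 : listMul (Pb ++ (y * w) :: S) = listMul (P ++ x :: y :: w :: S) := by
      rw [hPb_def, hPsplit]
      calc listMul ((P' ++ [p * x]) ++ (y * w) :: S)
          = listMul (P' ++ (p * x) :: (y * w) :: S) := by simp
        _ = listMul (P' ++ p :: x :: (y * w) :: S) := listMul_flat P' p x _
        _ = listMul ((P' ++ [p, x]) ++ (y * w) :: S) := by simp
        _ = listMul ((P' ++ [p, x]) ++ y :: w :: S) := listMul_flat _ y w S
        _ = listMul ((P' ++ [p]) ++ x :: y :: w :: S) := by simp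
    have e3 : listMul (Pb ++ w :: S) = listMul (P ++ x :: w :: S) := by
      rw [hPb_def, hPsplit]
      calc listMul ((P' ++ [p * x]) ++ w :: S)
          = listMul (P' ++ (p * x) :: w :: S) := by simp
        _ = listMul (P' ++ p :: x :: w :: S) := listMul_flat P' p x _
        _ = listMul ((P' ++ [p]) ++ x :: w :: S) := by simp
    rw [← e2, e1, e3]
  have stepc : y * listMul (P ++ x :: w :: S) = listMul (y :: x :: zs) := by
    have e1 : listMul (P ++ (x * w) :: S) = x * listMul (P ++ w :: S) :=
      star x w P S hP hPS
    have e2 : listMul (P ++ x :: w :: S) = listMul (P ++ (x * w) :: S) :=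
      (listMul_flat P x w S).symm
    rw [e2, e1, ← hzs_split]
    show y * (x * listMul zs) = y * listMul (x :: zs)
    rw [listMul_cons x zs hzs_ne]
  show listMul (List.ofFn a) = listMul (List.ofFn fun j => a (Equiv.swap (0 : Fin (n+3)) 1 j))
  rw [hofa, hofswap, step1, step2, step3, stepb, stepc]
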